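/- arXiv:2010.00817 — 2 statements merged into one kernel-verified Lean document; each statement's English description precedes it below -/
import Mathlib

section
/- Let F : ℝ^d → ℝ be differentiable with L_Ω-Lipschitz gradient, let R : ℝ^d → ℝ be lower semicontinuous and convex, P = F + R, and let U ∈ ℝ^{d×d} be symmetric positive definite. Fix w, v ∈ ℝ^d and define w₊ = prox_R^{U^{-1}}( w − U v ) and w̄₊ = prox_R^{U^{-1}}( w − U ∇F(w) ). Then P(w₊) ≤ P(w) + (w̄₊ − w)ᵀ( L_Ω I − (1/2) U^{-1} )(w̄₊ − w) + (1/2)(w₊ − w)ᵀ( L_Ω I − U^{-1} )(w₊ − w) − (1/2)‖w₊ − w̄₊‖_{U^{-1}}² + ⟨w₊ − w̄₊, ∇F(w) − v⟩. -/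
open scoped BigOperators RealInnerProductSpace

/-- `ℝ^d` as Euclidean space. -/
abbrev Euc (d : ℕ) := EuclideanSpace ℝ (Fin d)

/-- Action of a `d × d` real matrix on a vector of `ℝ^d`. -/
noncomputable def mdot {d : ℕ} (M : Matrix (Fin d) (Fin d) ℝ) (x : Euc d) : Euc d :=
  Matrix.toEuclideanLin M x

/-- The quadratic form `‖x‖_M² = xᵀ M x` associated with a matrix `M`. -/
noncomputable def qf {d : ℕ} (M : Matrix (Fin d) (Fin d) ℝ) (x : Euc d) : ℝ :=
  ⟪x, mdot M x⟫

/-- `u` is a point of the scaled proximal operator `prox_R^M (w)`, i.e. a minimizer of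
`y ↦ (1/2)‖y - w‖_M² + R y`, for a real-valued `R`. -/
def IsProxR {d : ℕ} (R : Euc d → ℝ) (M : Matrix (Fin d) (Fin d) ℝ) (w u : Euc d) : Prop :=
  ∀ y, 2⁻¹ * qf M (u - w) + R u ≤ 2⁻¹ * qf M (y - w) + R y

-- expansion lemma
lemma qf_add_smul {d : ℕ} (M : Matrix (Fin d) (Fin d) ℝ) (a c : Euc d) (t : ℝ) :
    qf M (a + t • c) = qf M a + t * (⟪a, mdot M c⟫ + ⟪c, mdot M a⟫) + t ^ 2 * qf M c := by
  unfold qf mdot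
  simp only [map_add, map_smul, inner_add_left, inner_add_right, real_inner_smul_left,
    real_inner_smul_right, smul_eq_mul]
  ring

lemma qf_add {d : ℕ} (M : Matrix (Fin d) (Fin d) ℝ) (a c : Euc d) :
    qf M (a + c) = qf M a + (⟪a, mdot M c⟫ + ⟪c, mdot M a⟫) + qf M c := by
  have := qf_add_smul M a c 1
  simpa using this

lemma qf_neg {d : ℕ} (M : Matrix (Fin d) (Fin d) ℝ) (a : Euc d) : qf M (-a) = qf M a := by
  unfold qf mdot
  simp

lemma prox_strong {d : ℕ} {R : Euc d → ℝ} (hconv : ConvexOn ℝ Set.univ R)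
    {M : Matrix (Fin d) (Fin d) ℝ} (hnn : ∀ x, 0 ≤ qf M x) {z u : Euc d}
    (h : IsProxR R M z u) (y : Euc d) :
    2⁻¹ * qf M (u - z) + R u + 2⁻¹ * qf M (y - u) ≤ 2⁻¹ * qf M (y - z) + R y := by
  set S : ℝ := ⟪u - z, mdot M (y - u)⟫ + ⟪y - u, mdot M (u - z)⟫ with hS
  set K : ℝ := qf M (y - u) with hK
  have hKnn : 0 ≤ K := hnn _
  have key : 0 ≤ 2⁻¹ * S + R y - R u := by
    by_contra hlt
    push_neg at hlt
    set A : ℝ := -(2⁻¹ * S + R y - R u) with hA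
    have hApos : 0 < A := by simp [hA]; linarith
    set t : ℝ := min 1 (A / (K + 1)) with ht
    have htpos : 0 < t := lt_min one_pos (div_pos hApos (by linarith))
    have ht1 : t ≤ 1 := min_le_left _ _
    have htK : t * (K + 1) ≤ A := by
      have := min_le_right 1 (A / (K + 1))
      calc t * (K + 1) ≤ (A / (K + 1)) * (K + 1) := by
            apply mul_le_mul_of_nonneg_right this (by linarith)
        _ = A := div_mul_cancel₀ A (by linarith)
    have hmem := h (u + t • (y - u))
    have hexp : qf M (u + t • (y - u) - z) = qf M (u - z) + t * S + t ^ 2 * K := by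
      have : u + t • (y - u) - z = (u - z) + t • (y - u) := by abel
      rw [this, qf_add_smul]
    have hcvx : R (u + t • (y - u)) ≤ (1 - t) * R u + t * R y := by
      have h2 := hconv.2 (Set.mem_univ u) (Set.mem_univ y) (by linarith : (0:ℝ) ≤ 1 - t)
        (le_of_lt htpos) (by ring)
      have heq : (1 - t) • u + t • y = u + t • (y - u) := by
        simp [sub_smul, smul_sub]; abel
      rw [heq] at h2
      simpa using h2
    rw [hexp] at hmem
    have h1 : t * 0 ≤ t * (2⁻¹ * S + (R y - R u) + 2⁻¹ * (t * K)) := by nlinarith [hmem, hcvx]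
    have h2 : (0:ℝ) ≤ 2⁻¹ * S + (R y - R u) + 2⁻¹ * (t * K) :=
      le_of_mul_le_mul_left h1 htpos
    clear_value t A S K
    linarith [h2, htK, htpos, hApos, hA]
  have hyz : qf M (y - z) = qf M (u - z) + S + K := by
    have : y - z = (u - z) + (y - u) := by abel
    rw [this, qf_add, hS, hK]
  rw [hyz]
  linarith

lemma descent {d : ℕ} {F : Euc d → ℝ} {gF : Euc d → Euc d}
    (hF : ∀ x, HasGradientAt F (gF x) x) {L : ℝ}
    (hLip : ∀ x y, ‖gF x - gF y‖ ≤ L * ‖x - y‖) (x y : Euc d) :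
    F y ≤ F x + ⟪gF x, y - x⟫ + L / 2 * ‖y - x‖ ^ 2 := by
  set c : ℝ → Euc d := fun t => x + t • (y - x) with hc
  have hcd : ∀ t : ℝ, HasDerivAt c (y - x) t := by
    intro t
    have := ((hasDerivAt_id t).smul_const (y - x)).const_add x
    simpa [hc] using this
  have hg : ∀ t : ℝ, HasDerivAt (fun s => F (c s)) ⟪gF (c t), y - x⟫ t := by
    intro t
    have h1 := (hF (c t)).hasFDerivAt.comp_hasDerivAt t (hcd t)
    simp [InnerProductSpace.toDual_apply_apply] at h1
    exact h1
  set A : ℝ := ⟪gF x, y - x⟫ with hA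
  set B : ℝ := L / 2 * ‖y - x‖ ^ 2 with hB
  set φ : ℝ → ℝ := fun t => F x + t * A + B * t ^ 2 - F (c t) with hφ
  have hφ' : ∀ t : ℝ, HasDerivAt φ (A + B * (2 * t) - ⟪gF (c t), y - x⟫) t := by
    intro t
    have h1 : HasDerivAt (fun s : ℝ => F x + s * A + B * s ^ 2) (A + B * (2 * t)) t := by
      have ha := ((hasDerivAt_id t).mul_const A).const_add (F x)
      have hb := (hasDerivAt_pow 2 t).const_mul B
      have h3 := ha.add hb
      simp [mul_comm] at h3 ⊢
      exact h3
    exact h1.sub (hg t)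
  have hdiff : Differentiable ℝ φ := fun t => (hφ' t).differentiableAt
  have hmono : MonotoneOn φ (Set.Icc (0:ℝ) 1) := by
    apply monotoneOn_of_deriv_nonneg (convex_Icc 0 1) hdiff.continuous.continuousOn
      hdiff.differentiableOn
    intro t htmem
    rw [interior_Icc] at htmem
    rw [(hφ' t).deriv]
    have hles : ⟪gF (c t) - gF x, y - x⟫ ≤ L * t * ‖y - x‖ ^ 2 := by
      calc ⟪gF (c t) - gF x, y - x⟫ ≤ ‖gF (c t) - gF x‖ * ‖y - x‖ := real_inner_le_norm _ _
        _ ≤ (L * ‖c t - x‖) * ‖y - x‖ := by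
            apply mul_le_mul_of_nonneg_right (hLip _ _) (norm_nonneg _)
        _ = L * t * ‖y - x‖ ^ 2 := by
            have : c t - x = t • (y - x) := by simp [hc]
            rw [this, norm_smul]
            simp [abs_of_pos htmem.1]
            ring
    have : ⟪gF (c t), y - x⟫ = A + ⟪gF (c t) - gF x, y - x⟫ := by
      simp [hA, inner_sub_left]
    rw [this]
    have : B * (2 * t) = L * t * ‖y - x‖ ^ 2 := by rw [hB]; ring
    linarith
  have h01 := hmono (Set.mem_Icc.mpr ⟨le_refl 0, zero_le_one⟩)
    (Set.mem_Icc.mpr ⟨zero_le_one, le_refl 1⟩) zero_le_one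
  have hc0 : c 0 = x := by simp [hc]
  have hc1 : c 1 = y := by simp [hc]
  simp only [hφ, hc0, hc1] at h01
  simp at h01
  linarith [h01]

/-- for `F` differentiable with `L_Ω`-Lipschitz gradient, `R` lsc convex,
`P = F + R`, `U` symmetric positive definite, `w₊ = prox_R^{U⁻¹}(w − Uv)` and
`w̄₊ = prox_R^{U⁻¹}(w − U∇F(w))`:
`P(w₊) ≤ P(w) + (w̄₊ − w)ᵀ(L_Ω I − (1/2)U⁻¹)(w̄₊ − w) + (1/2)(w₊ − w)ᵀ(L_Ω I − U⁻¹)(w₊ − w)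
 − (1/2)‖w₊ − w̄₊‖_{U⁻¹}² + ⟨w₊ − w̄₊, ∇F(w) − v⟩`. -/
theorem vm_prox_stochastic_descent {d : ℕ} (F : Euc d → ℝ) (gF : Euc d → Euc d)
    (hF : ∀ x, HasGradientAt F (gF x) x)
    (LΩ : ℝ) (hLip : ∀ x y, ‖gF x - gF y‖ ≤ LΩ * ‖x - y‖)
    (R : Euc d → ℝ) (hlsc : LowerSemicontinuous R) (hconv : ConvexOn ℝ Set.univ R)
    (U : Matrix (Fin d) (Fin d) ℝ) (hU : U.PosDef) (w v wp wbar : Euc d)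
    (hwp : IsProxR R U⁻¹ (w - mdot U v) wp)
    (hwbar : IsProxR R U⁻¹ (w - mdot U (gF w)) wbar) :
    F wp + R wp ≤ F w + R w
      + qf (LΩ • (1 : Matrix (Fin d) (Fin d) ℝ) - (2⁻¹ : ℝ) • U⁻¹) (wbar - w)
      + 2⁻¹ * qf (LΩ • (1 : Matrix (Fin d) (Fin d) ℝ) - U⁻¹) (wp - w)
      - 2⁻¹ * qf U⁻¹ (wp - wbar)
      + ⟪wp - wbar, gF w - v⟫ := by
  have hQ : (U⁻¹).PosDef := hU.inv
  -- nonnegativity of the quadratic form of U⁻¹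
  have hQnn : ∀ x : Euc d, 0 ≤ qf U⁻¹ x := by
    intro x
    have h := hQ.posSemidef.dotProduct_mulVec_nonneg ((WithLp.equiv 2 _) x)
    simpa [qf, mdot, EuclideanSpace.inner_eq_star_dotProduct,
      Matrix.toEuclideanLin_apply, dotProduct_comm (U⁻¹.mulVec _)] using h
  -- self-adjointness
  have hs := Matrix.isHermitian_iff_isSymmetric.mp hQ.1
  have hsym : ∀ x y : Euc d, ⟪x, mdot U⁻¹ y⟫ = ⟪y, mdot U⁻¹ x⟫ := by
    intro x y
    have h1 := hs y x
    calc ⟪x, mdot U⁻¹ y⟫ = ⟪mdot U⁻¹ y, x⟫ := real_inner_comm _ _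
      _ = ⟪y, mdot U⁻¹ x⟫ := h1
  -- U⁻¹ * U = 1 on vectors
  have hdet : IsUnit U.det := isUnit_iff_ne_zero.mpr hU.det_pos.ne'
  have hinvU : U⁻¹ * U = 1 := Matrix.nonsing_inv_mul U hdet
  have hQU : ∀ x : Euc d, mdot U⁻¹ (mdot U x) = x := by
    intro x
    simp [mdot, Matrix.toEuclideanLin_apply, Equiv.apply_symm_apply,
      Matrix.mulVec_mulVec, hinvU, Matrix.one_mulVec]
  -- quadratic form of L•1 - c•U⁻¹
  have hqlin : ∀ (c : ℝ) (x : Euc d),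
      qf (LΩ • (1 : Matrix (Fin d) (Fin d) ℝ) - c • U⁻¹) x = LΩ * ‖x‖ ^ 2 - c * qf U⁻¹ x := by
    intro c x
    have h1 : mdot (1 : Matrix (Fin d) (Fin d) ℝ) x = x := by
      simp [mdot, Matrix.toEuclideanLin_apply, Matrix.one_mulVec]
    have hsub : mdot (LΩ • (1 : Matrix (Fin d) (Fin d) ℝ) - c • U⁻¹) x
        = LΩ • mdot (1 : Matrix (Fin d) (Fin d) ℝ) x - c • mdot U⁻¹ x := by
      simp [mdot, map_sub, map_smul]
    rw [qf, hsub, h1, inner_sub_right, real_inner_smul_right, real_inner_smul_right,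
      real_inner_self_eq_norm_sq, qf]
  -- the three key inequalities
  have i1 : F wp ≤ F w + ⟪gF w, wp - w⟫ + LΩ / 2 * ‖wp - w‖ ^ 2 := descent hF hLip w wp
  have i2 := prox_strong hconv hQnn hwbar w
  have i3 := prox_strong hconv hQnn hwp wbar
  -- expand i2
  have e2a : wbar - (w - mdot U (gF w)) = (wbar - w) + mdot U (gF w) := by abel
  have e2b : w - (w - mdot U (gF w)) = mdot U (gF w) := by abel
  rw [e2a, e2b, qf_add, hQU] at i2
  have e2c : ⟪mdot U (gF w), mdot U⁻¹ (wbar - w)⟫ = ⟪wbar - w, gF w⟫ := by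
    rw [← hsym, hQU]
  rw [e2c] at i2
  have hflip1 : qf U⁻¹ (w - wbar) = qf U⁻¹ (wbar - w) := by
    rw [← neg_sub wbar w, qf_neg]
  rw [hflip1] at i2
  -- expand i3
  have e3a : wp - (w - mdot U v) = (wp - w) + mdot U v := by abel
  have e3b : wbar - (w - mdot U v) = (wbar - w) + mdot U v := by abel
  rw [e3a, e3b, qf_add, qf_add, hQU] at i3
  have e3c : ∀ x : Euc d, ⟪mdot U v, mdot U⁻¹ x⟫ = ⟪x, v⟫ := by
    intro x; rw [← hsym, hQU]
  rw [e3c, e3c] at i3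
  have hflip2 : qf U⁻¹ (wbar - wp) = qf U⁻¹ (wp - wbar) := by
    rw [← neg_sub wp wbar, qf_neg]
  rw [hflip2] at i3
  -- rewrite goal
  have g1 : qf (LΩ • (1 : Matrix (Fin d) (Fin d) ℝ) - (2⁻¹ : ℝ) • U⁻¹) (wbar - w)
      = LΩ * ‖wbar - w‖ ^ 2 - 2⁻¹ * qf U⁻¹ (wbar - w) := hqlin _ _
  have g2 : qf (LΩ • (1 : Matrix (Fin d) (Fin d) ℝ) - U⁻¹) (wp - w)
      = LΩ * ‖wp - w‖ ^ 2 - qf U⁻¹ (wp - w) := by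
    have := hqlin 1 (wp - w); simpa using this
  rw [g1, g2]
  -- inner product identity
  have hinner : ⟪wp - wbar, gF w - v⟫
      = ⟪gF w, wp - w⟫ - ⟪wbar - w, gF w⟫ - ⟪wp - w, v⟫ + ⟪wbar - w, v⟫ := by
    simp only [inner_sub_left, inner_sub_right]
    rw [real_inner_comm (gF w) w, real_inner_comm (gF w) wp]
    ring
  -- L * ‖wbar - w‖² ≥ 0
  have hLnn : 0 ≤ LΩ * ‖wbar - w‖ ^ 2 := by
    have h0 := hLip wbar w
    nlinarith [norm_nonneg (gF wbar - gF w), norm_nonneg (wbar - w)]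
  rw [hinner]
  linarith [i1, i2, i3, hLnn]
end

section
/- Let ω > 0, 0 < α² ≤ α¹ be real numbers, and let s, y, u' ∈ ℝ^d. Consider the problem of minimizing ‖s − Diag(u) y‖₂² + ω ∑_{i=1}^d (u^i − u'^i)² over all u ∈ ℝ^d with α² ≤ u^i ≤ α¹ for each i (equivalently, minimizing ‖s − U y‖₂² + ω‖U − Diag(u')‖_F² over diagonal matrices U with α² I ≼ U ≼ α¹ I). This problem has a unique solution u given coordinatewise by u^i = α² if (s^i y^i + ω u'^i)/((y^i)² + ω) < α², u^i = α¹ if (s^i y^i + ω u'^i)/((y^i)² + ω) > α¹, and u^i = (s^i y^i + ω u'^i)/((y^i)² + ω) otherwise. -/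
open scoped BigOperators


lemma clip_key (ω : ℝ) (hω : 0 < ω) (α1 α2 : ℝ) (hαle : α2 ≤ α1)
    (s y u' t : ℝ) (ht1 : α2 ≤ t) (ht2 : t ≤ α1) :
    (fun c => (s - c * y) ^ 2 + ω * (c - u') ^ 2 ≤ (s - t * y) ^ 2 + ω * (t - u') ^ 2 ∧
      ((s - t * y) ^ 2 + ω * (t - u') ^ 2 ≤ (s - c * y) ^ 2 + ω * (c - u') ^ 2 → t = c))
    (if (s * y + ω * u') / (y ^ 2 + ω) < α2 then α2
      else if α1 < (s * y + ω * u') / (y ^ 2 + ω) then α1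
      else (s * y + ω * u') / (y ^ 2 + ω)) := by
  have ha : 0 < y ^ 2 + ω := by positivity
  set a := y ^ 2 + ω with haa
  set b := s * y + ω * u' with hb
  have key : ∀ c : ℝ, (s - t * y) ^ 2 + ω * (t - u') ^ 2 - ((s - c * y) ^ 2 + ω * (c - u') ^ 2)
      = a * (t - c) ^ 2 + 2 * (a * c - b) * (t - c) := by
    intro c; simp only [haa, hb]; ring
  split_ifs with h1 h2
  · -- c = α2, b/a < α2, so b < a*α2
    have hlt : b < a * α2 := by
      rw [div_lt_iff₀ ha] at h1; linarith
    have hnn : 0 ≤ a * (t - α2) ^ 2 := by positivity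
    have hnn2 : 0 ≤ 2 * (a * α2 - b) * (t - α2) := by
      apply mul_nonneg; · nlinarith
      · linarith
    constructor
    · nlinarith [key α2]
    · intro h
      have h0 : a * (t - α2) ^ 2 + 2 * (a * α2 - b) * (t - α2) ≤ 0 := by
        nlinarith [key α2]
      have : (t - α2) ^ 2 ≤ 0 := by nlinarith
      have := pow_eq_zero_iff (n := 2) (by norm_num) |>.mp (le_antisymm this (sq_nonneg _))
      linarith
  · have hlt : a * α1 < b := by
      rw [lt_div_iff₀ ha] at h2; linarith
    have hnn2 : 0 ≤ 2 * (a * α1 - b) * (t - α1) := by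
      have h3 : 2 * (a * α1 - b) ≤ 0 := by nlinarith
      have h4 : t - α1 ≤ 0 := by linarith
      nlinarith
    constructor
    · nlinarith [key α1, sq_nonneg (t - α1)]
    · intro h
      have : (t - α1) ^ 2 ≤ 0 := by nlinarith [key α1]
      have := pow_eq_zero_iff (n := 2) (by norm_num) |>.mp (le_antisymm this (sq_nonneg _))
      linarith
  · have hc : a * (b / a) - b = 0 := by field_simp; ring
    constructor
    · nlinarith [key (b / a), sq_nonneg (t - b / a)]
    · intro h
      have : (t - b / a) ^ 2 ≤ 0 := by nlinarith [key (b / a)]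
      have := pow_eq_zero_iff (n := 2) (by norm_num) |>.mp (le_antisymm this (sq_nonneg _))
      linarith

/-- the diagonal BB-metric subproblem
`min ‖s − Diag(u)y‖₂² + ω ∑ᵢ (uᶦ − u'ᶦ)²` over the box `α² ≤ uᶦ ≤ α¹` has a unique solution,
given coordinatewise by clipping `(sᶦyᶦ + ω u'ᶦ)/((yᶦ)² + ω)` to `[α², α¹]`: a point `u` of the
box is a minimizer iff it equals that closed-form solution. -/
theorem diagonal_bb_subproblem_solution {d : ℕ} (ω : ℝ) (hω : 0 < ω)
    (α1 α2 : ℝ) (hα : 0 < α2) (hαle : α2 ≤ α1) (s y u' : Fin d → ℝ) :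
    ∀ u : Fin d → ℝ,
      ((∀ i, α2 ≤ u i ∧ u i ≤ α1) ∧
        ∀ z : Fin d → ℝ, (∀ i, α2 ≤ z i ∧ z i ≤ α1) →
          (∑ i, (s i - u i * y i) ^ 2) + ω * ∑ i, (u i - u' i) ^ 2
            ≤ (∑ i, (s i - z i * y i) ^ 2) + ω * ∑ i, (z i - u' i) ^ 2)
      ↔ u = fun i =>
          if (s i * y i + ω * u' i) / ((y i) ^ 2 + ω) < α2 then α2
          else if α1 < (s i * y i + ω * u' i) / ((y i) ^ 2 + ω) then α1
          else (s i * y i + ω * u' i) / ((y i) ^ 2 + ω) := by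
  intro u
  set c : Fin d → ℝ := fun i =>
      if (s i * y i + ω * u' i) / ((y i) ^ 2 + ω) < α2 then α2
      else if α1 < (s i * y i + ω * u' i) / ((y i) ^ 2 + ω) then α1
      else (s i * y i + ω * u' i) / ((y i) ^ 2 + ω) with hc
  have hcbox : ∀ i, α2 ≤ c i ∧ c i ≤ α1 := by
    intro i
    simp only [hc]
    split_ifs with h1 h2
    · exact ⟨le_refl _, hαle⟩
    · exact ⟨hαle, le_refl _⟩
    · exact ⟨le_of_not_gt h1, le_of_not_gt h2⟩
  have hF : ∀ v : Fin d → ℝ,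
      (∑ i, (s i - v i * y i) ^ 2) + ω * ∑ i, (v i - u' i) ^ 2
        = ∑ i, ((s i - v i * y i) ^ 2 + ω * (v i - u' i) ^ 2) := by
    intro v
    rw [Finset.mul_sum, ← Finset.sum_add_distrib]
  have hkey := fun i (t : ℝ) (ht1 : α2 ≤ t) (ht2 : t ≤ α1) =>
    clip_key ω hω α1 α2 hαle (s i) (y i) (u' i) t ht1 ht2
  constructor
  · rintro ⟨hbox, hmin⟩
    funext i
    set z : Fin d → ℝ := Function.update u i (c i) with hz
    have hzbox : ∀ j, α2 ≤ z j ∧ z j ≤ α1 := by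
      intro j
      rcases eq_or_ne j i with rfl | hji
      · simpa [hz] using hcbox j
      · simpa [hz, Function.update_of_ne hji] using hbox j
    have hle := hmin z hzbox
    rw [hF u, hF z] at hle
    have hdiff : ∑ j, ((s j - z j * y j) ^ 2 + ω * (z j - u' j) ^ 2)
        - ∑ j, ((s j - u j * y j) ^ 2 + ω * (u j - u' j) ^ 2)
        = ((s i - c i * y i) ^ 2 + ω * (c i - u' i) ^ 2)
          - ((s i - u i * y i) ^ 2 + ω * (u i - u' i) ^ 2) := by
      rw [← Finset.sum_sub_distrib]
      rw [Finset.sum_eq_single i]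
      · simp [hz]
      · intro j _ hji
        simp [hz, Function.update_of_ne hji]
      · intro h; exact absurd (Finset.mem_univ i) h
    have hle2 : (s i - u i * y i) ^ 2 + ω * (u i - u' i) ^ 2
        ≤ (s i - c i * y i) ^ 2 + ω * (c i - u' i) ^ 2 := by linarith
    exact (hkey i (u i) (hbox i).1 (hbox i).2).2 hle2
  · rintro rfl
    refine ⟨hcbox, fun z hzbox => ?_⟩
    rw [hF _, hF z]
    exact Finset.sum_le_sum fun i _ => (hkey i (z i) (hzbox i).1 (hzbox i).2).1
end
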